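/- Let p = n^{−α} with α ∈ [1, 3/2). Then with probability tending to 1 as n → ∞, the Erdős–Rényi random graph G(n,p) has two minimal vertex covers of different cardinalities. (Equivalently, the random edge ideal I(n,p) is not unmixed with high probability.) -/

import Mathlib

open Filter Finset

/-- Probability weight of a given graph `G` under the Erdős–Rényi model `G(n,p)`:
each of the `n.choose 2` possible edges is present independently with probability `p`. -/
noncomputable def graphWeight (n : ℕ) (p : ℝ) (G : SimpleGraph (Fin n)) : ℝ :=
  p ^ Nat.card G.edgeSet * (1 - p) ^ (n.choose 2 - Nat.card G.edgeSet)

/-- Probability of the event `A` under the Erdős–Rényi random graph `G(n,p)`. -/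
noncomputable def erProb (n : ℕ) (p : ℝ) (A : Set (SimpleGraph (Fin n))) : ℝ :=
  ∑ G : SimpleGraph (Fin n), A.indicator (graphWeight n p) G

/-- A set of vertices `C` is a vertex cover of `G` if every edge of `G` has an
endpoint in `C`. -/
def IsVertexCover {V : Type} (G : SimpleGraph V) (C : Set V) : Prop :=
  ∀ ⦃u w : V⦄, G.Adj u w → u ∈ C ∨ w ∈ C

/-- A vertex cover is minimal if no proper subset of it is a vertex cover. -/
def IsMinimalVertexCover {V : Type} (G : SimpleGraph V) (C : Set V) : Prop :=
  IsVertexCover G C ∧ ∀ D : Set V, D ⊂ C → ¬IsVertexCover G D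

/-- All minimal vertex covers of `G` have the same cardinality (equivalently, the
edge ideal of `G` is unmixed). -/
def Unmixed {V : Type} (G : SimpleGraph V) : Prop :=
  ∀ C D : Set V, IsMinimalVertexCover G C → IsMinimalVertexCover G D → C.ncard = D.ncard

namespace ERProof


variable {ι : Type*} [Fintype ι] [DecidableEq ι]

/-- weight of a single Boolean value -/
def w (p : ℝ) (b : Bool) : ℝ := if b then p else 1 - p

/-- product weight of a Boolean configuration -/
noncomputable def bw (p : ℝ) (f : ι → Bool) : ℝ := ∏ i, w p (f i)

lemma sum_prod_bool (g : ι → Bool → ℝ) :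
    ∑ f : ι → Bool, ∏ i, g i (f i) = ∏ i, (g i true + g i false) := by
  classical
  have h : ∏ i : ι, ∑ b ∈ (univ : Finset Bool), g i b
      = ∑ x ∈ Fintype.piFinset (fun _ : ι => (univ : Finset Bool)), ∏ i, g i (x i) :=
    Finset.prod_univ_sum _ _
  rw [Fintype.piFinset_univ] at h
  rw [← h]
  exact (Finset.prod_congr rfl fun i _ => by simp).symm

lemma sum_bw (p : ℝ) : ∑ f : ι → Bool, bw p f = 1 := by
  rw [show (fun f : ι → Bool => bw p f) = fun f => ∏ i, w p (f i) from rfl]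
  rw [sum_prod_bool (fun _ b => w p b)]
  have : ∀ i : ι, w p true + w p false = 1 := by intro i; simp [w]
  simp [w]

lemma bw_nonneg {p : ℝ} (hp0 : 0 ≤ p) (hp1 : p ≤ 1) (f : ι → Bool) : 0 ≤ bw p f :=
  Finset.prod_nonneg fun i _ => by cases f i <;> simp [w] <;> linarith

/-- probability of an event -/
noncomputable def Pb (p : ℝ) (B : Set (ι → Bool)) : ℝ := ∑ f : ι → Bool, B.indicator (bw p) f

lemma Pb_nonneg {p : ℝ} (hp0 : 0 ≤ p) (hp1 : p ≤ 1) (B : Set (ι → Bool)) : 0 ≤ Pb p B :=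
  Finset.sum_nonneg fun f _ => Set.indicator_nonneg (fun x _ => bw_nonneg hp0 hp1 x) f

lemma Pb_mono {p : ℝ} (hp0 : 0 ≤ p) (hp1 : p ≤ 1) {B B' : Set (ι → Bool)} (h : B ⊆ B') :
    Pb p B ≤ Pb p B' :=
  Finset.sum_le_sum fun f _ =>
    Set.indicator_le_indicator_of_subset h (fun x => bw_nonneg hp0 hp1 x) f

lemma Pb_le_one {p : ℝ} (hp0 : 0 ≤ p) (hp1 : p ≤ 1) (B : Set (ι → Bool)) : Pb p B ≤ 1 := by
  rw [← sum_bw (ι := ι) p]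
  exact Finset.sum_le_sum fun f _ => Set.indicator_le_self' (fun x _ => bw_nonneg hp0 hp1 x) f

lemma Pb_empty (p : ℝ) : Pb p (∅ : Set (ι → Bool)) = 0 := by simp [Pb]

/-- cylinder event -/
def cyl (S : Finset ι) (v : ι → Bool) : Set (ι → Bool) := {f | ∀ i ∈ S, f i = v i}

lemma Pb_cyl (p : ℝ) (S : Finset ι) (v : ι → Bool) :
    Pb p (cyl S v) = ∏ i ∈ S, w p (v i) := by
  classical
  have key : ∀ f : ι → Bool, (cyl S v).indicator (bw p) f
      = ∏ i, (if i ∈ S then (if f i = v i then w p (f i) else 0) else w p (f i)) := by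
    intro f
    rw [Set.indicator_apply]
    by_cases hf : f ∈ cyl S v
    · rw [if_pos hf, bw]
      exact Finset.prod_congr rfl fun i _ => by
        by_cases hi : i ∈ S
        · simp [hi, hf i hi]
        · simp [hi]
    · rw [if_neg hf]
      obtain ⟨i₀, hi₀, hne⟩ : ∃ i ∈ S, ¬ f i = v i := by
        simpa [cyl, not_forall] using hf
      exact (Finset.prod_eq_zero (Finset.mem_univ i₀) (by simp [hi₀, hne])).symm
  rw [Pb]
  rw [Finset.sum_congr rfl fun f _ => key f]
  rw [sum_prod_bool (fun i b => if i ∈ S then (if b = v i then w p b else 0) else w p b)]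
  have h2 : ∀ i : ι, ((if i ∈ S then (if true = v i then w p true else 0) else w p true)
      + (if i ∈ S then (if false = v i then w p false else 0) else w p false))
      = if i ∈ S then w p (v i) else 1 := by
    intro i
    by_cases hi : i ∈ S <;> cases hv : v i <;> simp [w, hi, hv] <;> ring
  rw [Finset.prod_congr rfl fun i _ => h2 i, Finset.prod_ite_mem, Finset.univ_inter]



/-- index type of possible edges -/
abbrev EI (n : ℕ) := {e : Sym2 (Fin n) // ¬ e.IsDiag}

def toGraph {n : ℕ} (f : EI n → Bool) : SimpleGraph (Fin n) where
  Adj u v := ∃ h : ¬ (s(u,v) : Sym2 (Fin n)).IsDiag, f ⟨s(u,v), h⟩ = true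
  symm := by
    constructor
    intro u v h
    have e : (s(u,v) : Sym2 (Fin n)) = s(v,u) := Sym2.eq_swap
    exact e ▸ h
  loopless := by
    constructor
    intro u ⟨h, _⟩
    exact h (by simp)

noncomputable def toFun {n : ℕ} (G : SimpleGraph (Fin n)) (e : EI n) : Bool :=
  @decide (e.1 ∈ G.edgeSet) (Classical.dec _)

lemma toFun_eq_true_iff {n : ℕ} (G : SimpleGraph (Fin n)) (e : EI n) :
    toFun G e = true ↔ e.1 ∈ G.edgeSet := by
  simp [toFun]

lemma toGraph_adj {n : ℕ} (f : EI n → Bool) (u v : Fin n) :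
    (toGraph f).Adj u v ↔ ∃ h : ¬ (s(u,v) : Sym2 (Fin n)).IsDiag, f ⟨s(u,v), h⟩ = true :=
  Iff.rfl

lemma toGraph_toFun {n : ℕ} (G : SimpleGraph (Fin n)) : toGraph (toFun G) = G := by
  ext u v
  rw [toGraph_adj]
  constructor
  · rintro ⟨h, hf⟩
    rw [toFun_eq_true_iff] at hf
    exact hf
  · intro h
    refine ⟨by simp [G.ne_of_adj h], ?_⟩
    rw [toFun_eq_true_iff]
    exact h

lemma toFun_toGraph {n : ℕ} (f : EI n → Bool) : toFun (toGraph f) = f := by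
  funext e
  obtain ⟨z, hz⟩ := e
  induction z using Sym2.ind with
  | _ u v =>
    have key : (toFun (toGraph f) ⟨s(u,v), hz⟩ = true) ↔ (f ⟨s(u,v), hz⟩ = true) := by
      rw [toFun_eq_true_iff, SimpleGraph.mem_edgeSet]
      constructor
      · rintro ⟨h', hf⟩; exact hf
      · intro hf; exact ⟨hz, hf⟩
    cases hA : toFun (toGraph f) ⟨s(u,v), hz⟩ <;> cases hB : f ⟨s(u,v), hz⟩ <;> simp_all

noncomputable def gEquiv (n : ℕ) : (EI n → Bool) ≃ SimpleGraph (Fin n) :=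
  ⟨toGraph, toFun, toFun_toGraph, toGraph_toFun⟩

lemma graphWeight_eq_bw {n : ℕ} (p : ℝ) (G : SimpleGraph (Fin n)) :
    graphWeight n p G = bw p (toFun G) := by
  classical
  have hsplit : bw p (toFun G) =
      p ^ #(univ.filter (fun e : EI n => toFun G e = true))
      * (1 - p) ^ #(univ.filter (fun e : EI n => ¬ toFun G e = true)) := by
    rw [bw]
    rw [show (fun e : EI n => w p (toFun G e))
        = fun e => if toFun G e = true then p else 1 - p from by
      funext e; cases h : toFun G e <;> simp [w, h]]
    rw [Finset.prod_ite _ _]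
    simp
  have hcard : #(univ.filter (fun e : EI n => toFun G e = true)) = Nat.card G.edgeSet := by
    have e1 : {e : EI n // toFun G e = true} ≃ {e : EI n // e.1 ∈ G.edgeSet} :=
      Equiv.subtypeEquivRight fun e => toFun_eq_true_iff G e
    have e2 : {e : EI n // e.1 ∈ G.edgeSet} ≃
        {z : Sym2 (Fin n) // ¬ z.IsDiag ∧ z ∈ G.edgeSet} :=
      Equiv.subtypeSubtypeEquivSubtypeInter _ _
    have e3 : {z : Sym2 (Fin n) // ¬ z.IsDiag ∧ z ∈ G.edgeSet} ≃ G.edgeSet :=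
      Equiv.subtypeEquivRight fun z => by
        constructor
        · exact fun h => h.2
        · exact fun h => ⟨G.not_isDiag_of_mem_edgeSet h, h⟩
    calc #(univ.filter (fun e : EI n => toFun G e = true))
        = Fintype.card {e : EI n // toFun G e = true} := (Fintype.card_subtype _).symm
      _ = Nat.card {e : EI n // toFun G e = true} := (Nat.card_eq_fintype_card).symm
      _ = Nat.card G.edgeSet := Nat.card_congr (e1.trans (e2.trans e3))
  have htot : #(univ.filter (fun e : EI n => toFun G e = true))
      + #(univ.filter (fun e : EI n => ¬ toFun G e = true)) = n.choose 2 := by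
    rw [Finset.card_filter_add_card_filter_not]
    rw [Finset.card_univ]
    rw [Sym2.card_subtype_not_diag, Fintype.card_fin]
  rw [hsplit, hcard, graphWeight]
  congr 1
  congr 1
  omega

lemma erProb_eq_Pb (n : ℕ) (p : ℝ) (A : Set (SimpleGraph (Fin n))) :
    erProb n p A = Pb p (toGraph ⁻¹' A) := by
  classical
  rw [erProb, Pb]
  rw [← Equiv.sum_comp (gEquiv n) (fun G => A.indicator (graphWeight n p) G)]
  apply Finset.sum_congr rfl
  intro f _
  rw [Set.indicator_apply, Set.indicator_apply]
  have hmem : (gEquiv n) f ∈ A ↔ f ∈ toGraph ⁻¹' A := Iff.rfl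
  by_cases h : f ∈ toGraph ⁻¹' A
  · rw [if_pos (hmem.2 h), if_pos h]
    show graphWeight n p (toGraph f) = bw p f
    rw [graphWeight_eq_bw, toFun_toGraph]
  · rw [if_neg (fun hh => h (hmem.1 hh)), if_neg h]



/-- every finite graph has a minimal vertex cover -/
lemma exists_minimal_cover {n : ℕ} (G : SimpleGraph (Fin n)) :
    ∃ C : Set (Fin n), IsMinimalVertexCover G C := by
  classical
  set M : Set ℕ := {m | ∃ C : Set (Fin n), IsVertexCover G C ∧ C.ncard = m} with hM
  have hne : M.Nonempty := ⟨(Set.univ : Set (Fin n)).ncard, Set.univ, fun u w _ => Or.inl trivial, rfl⟩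
  obtain ⟨C, hC, hCcard⟩ := Nat.sInf_mem hne
  refine ⟨C, hC, ?_⟩
  intro D hD hDc
  have h1 : D.ncard < C.ncard := Set.ncard_lt_ncard hD (Set.toFinite C)
  have h2 : sInf M ≤ D.ncard := Nat.sInf_le ⟨D, hDc, rfl⟩
  omega

lemma cherry_not_unmixed {n : ℕ} (G : SimpleGraph (Fin n)) (a b c : Fin n)
    (hab : G.Adj a b) (hac : G.Adj a c) (hbc : b ≠ c)
    (hbadj : ∀ x, G.Adj b x → x = a)
    (hcadj : ∀ x, G.Adj c x → x = a)
    (haadj : ∀ x, G.Adj a x → x = b ∨ x = c) :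
    ∃ C D : Set (Fin n), IsMinimalVertexCover G C ∧ IsMinimalVertexCover G D ∧
      C.ncard ≠ D.ncard := by
  classical
  have hba : a ≠ b := G.ne_of_adj hab
  have hca : a ≠ c := G.ne_of_adj hac
  obtain ⟨C, hCcov, hCmin⟩ := exists_minimal_cover G
  -- every edge incident to the triple is ab or ac (as ordered claims)
  by_cases haC : a ∈ C
  · -- b, c ∉ C
    have hbC : b ∉ C := by
      intro hbC
      apply hCmin (C \ {b}) ⟨Set.diff_subset, fun hsub => (hsub hbC).2 rfl⟩
      intro u w huw
      rcases hCcov huw with h | h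
      · by_cases hub : u = b
        · right
          have : w = a := hbadj w (hub ▸ huw)
          refine ⟨this ▸ haC, ?_⟩
          simp only [this, Set.mem_singleton_iff]
          exact hba
        · exact Or.inl ⟨h, by simp [hub]⟩
      · by_cases hwb : w = b
        · left
          have : u = a := hbadj u (hwb ▸ huw.symm)
          refine ⟨this ▸ haC, ?_⟩
          simp only [this, Set.mem_singleton_iff]
          exact hba
        · exact Or.inr ⟨h, by simp [hwb]⟩
    have hcC : c ∉ C := by
      intro hcC
      apply hCmin (C \ {c}) ⟨Set.diff_subset, fun hsub => (hsub hcC).2 rfl⟩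
      intro u w huw
      rcases hCcov huw with h | h
      · by_cases hub : u = c
        · right
          have : w = a := hcadj w (hub ▸ huw)
          refine ⟨this ▸ haC, ?_⟩
          simp only [this, Set.mem_singleton_iff]
          exact hca
        · exact Or.inl ⟨h, by simp [hub]⟩
      · by_cases hwb : w = c
        · left
          have : u = a := hcadj u (hwb ▸ huw.symm)
          refine ⟨this ▸ haC, ?_⟩
          simp only [this, Set.mem_singleton_iff]
          exact hca
        · exact Or.inr ⟨h, by simp [hwb]⟩
    set D : Set (Fin n) := (C \ {a}) ∪ {b, c} with hD
    -- any edge touching the triple is {a,b} or {a,c}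
    have edge_triple : ∀ u v : Fin n, G.Adj u v → u ∈ ({a, b, c} : Set (Fin n)) →
        (u = a ∧ (v = b ∨ v = c)) ∨ (v = a ∧ (u = b ∨ u = c)) := by
      intro u v huv hu
      rcases hu with hu | hu | hu
      · exact Or.inl ⟨hu, haadj v (hu ▸ huv)⟩
      · subst hu; exact Or.inr ⟨hbadj v huv, Or.inl rfl⟩
      · subst hu; exact Or.inr ⟨hcadj v huv, Or.inr rfl⟩
    have hDcov : IsVertexCover G D := by
      intro u v huv
      by_cases hu : u ∈ ({a, b, c} : Set (Fin n))
      · rcases edge_triple u v huv hu with ⟨_, hv⟩ | ⟨_, hu'⟩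
        · right; rcases hv with h | h <;> simp [hD, h]
        · left; rcases hu' with h | h <;> simp [hD, h]
      · by_cases hv : v ∈ ({a, b, c} : Set (Fin n))
        · rcases edge_triple v u huv.symm hv with ⟨_, hu'⟩ | ⟨_, hv'⟩
          · left; rcases hu' with h | h <;> simp [hD, h]
          · right; rcases hv' with h | h <;> simp [hD, h]
        · rcases hCcov huv with h | h
          · left
            have : u ≠ a := fun hh => hu (Or.inl hh)
            exact Or.inl ⟨h, this⟩
          · right
            have : v ≠ a := fun hh => hv (Or.inl hh)
            exact Or.inl ⟨h, this⟩
    have haD : a ∉ D := by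
      simp [hD, hba, hca]
    have hDmin : IsMinimalVertexCover G D := by
      refine ⟨hDcov, ?_⟩
      intro E hE hEcov
      have hbE : b ∈ E := by
        rcases hEcov hab with h | h
        · exact absurd (hE.1 h) haD
        · exact h
      have hcE : c ∈ E := by
        rcases hEcov hac with h | h
        · exact absurd (hE.1 h) haD
        · exact h
      -- E' := (E \ {b,c}) ∪ {a} is a cover properly inside C
      set E' : Set (Fin n) := (E \ {b, c}) ∪ {a} with hE'
      have hE'cov : IsVertexCover G E' := by
        intro u v huv
        by_cases hu : u ∈ ({a, b, c} : Set (Fin n))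
        · rcases edge_triple u v huv hu with ⟨hua, _⟩ | ⟨hva, _⟩
          · left; simp [hE', hua]
          · right; simp [hE', hva]
        · by_cases hv : v ∈ ({a, b, c} : Set (Fin n))
          · rcases edge_triple v u huv.symm hv with ⟨hva, _⟩ | ⟨hua, _⟩
            · right; simp [hE', hva]
            · left; simp [hE', hua]
          · rcases hEcov huv with h | h
            · left
              refine Or.inl ⟨h, ?_⟩
              simp only [Set.mem_insert_iff, Set.mem_singleton_iff] at hu ⊢
              tauto
            · right
              refine Or.inl ⟨h, ?_⟩
              simp only [Set.mem_insert_iff, Set.mem_singleton_iff] at hv ⊢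
              tauto
      have hE'sub : E' ⊂ C := by
        obtain ⟨x, hxD, hxE⟩ := Set.exists_of_ssubset hE
        have hxbc : x ≠ b ∧ x ≠ c := by
          constructor <;> intro hh <;> subst hh
          · exact hxE hbE
          · exact hxE hcE
        have hxC : x ∈ C \ {a} := by
          rcases hxD with h | h
          · exact h
          · rcases h with h | h
            · exact absurd h hxbc.1
            · exact absurd h hxbc.2
        constructor
        · intro y hy
          rcases hy with ⟨hyE, hybc⟩ | hy
          · have : y ∈ D := hE.1 hyE
            rcases this with h | h
            · exact h.1
            · exact absurd h (by simpa using hybc)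
          · simp only [Set.mem_singleton_iff] at hy
            exact hy ▸ haC
        · intro hsub
          have : x ∈ E' := hsub hxC.1
          rcases this with ⟨hxE', _⟩ | hxa
          · exact hxE hxE'
          · exact hxC.2 hxa
      exact hCmin E' hE'sub hE'cov
    refine ⟨C, D, ⟨hCcov, hCmin⟩, hDmin, ?_⟩
    have hdisj : Disjoint (C \ {a}) ({b, c} : Set (Fin n)) := by
      rw [Set.disjoint_right]
      rintro x (h | h) <;> intro hx <;> subst h
      · exact hbC hx.1
      · exact hcC hx.1
    have hDcard : D.ncard = C.ncard + 1 := by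
      rw [hD, Set.ncard_union_eq hdisj (Set.toFinite _) (Set.toFinite _)]
      rw [Set.ncard_diff_singleton_of_mem haC]
      rw [Set.ncard_pair hbc]
      have : 0 < C.ncard := (Set.ncard_pos (Set.toFinite C)).2 ⟨a, haC⟩
      omega
    omega
  · -- a ∉ C, so b, c ∈ C
    have hbC : b ∈ C := by
      rcases hCcov hab with h | h
      · exact absurd h haC
      · exact h
    have hcC : c ∈ C := by
      rcases hCcov hac with h | h
      · exact absurd h haC
      · exact h
    set D : Set (Fin n) := (C \ {b, c}) ∪ {a} with hD
    have edge_triple : ∀ u v : Fin n, G.Adj u v → u ∈ ({a, b, c} : Set (Fin n)) →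
        (u = a ∧ (v = b ∨ v = c)) ∨ (v = a ∧ (u = b ∨ u = c)) := by
      intro u v huv hu
      rcases hu with hu | hu | hu
      · exact Or.inl ⟨hu, haadj v (hu ▸ huv)⟩
      · subst hu; exact Or.inr ⟨hbadj v huv, Or.inl rfl⟩
      · subst hu; exact Or.inr ⟨hcadj v huv, Or.inr rfl⟩
    have hDcov : IsVertexCover G D := by
      intro u v huv
      by_cases hu : u ∈ ({a, b, c} : Set (Fin n))
      · rcases edge_triple u v huv hu with ⟨hua, _⟩ | ⟨hva, _⟩
        · left; simp [hD, hua]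
        · right; simp [hD, hva]
      · by_cases hv : v ∈ ({a, b, c} : Set (Fin n))
        · rcases edge_triple v u huv.symm hv with ⟨hva, _⟩ | ⟨hua, _⟩
          · right; simp [hD, hva]
          · left; simp [hD, hua]
        · rcases hCcov huv with h | h
          · left
            refine Or.inl ⟨h, ?_⟩
            simp only [Set.mem_insert_iff, Set.mem_singleton_iff] at hu ⊢
            tauto
          · right
            refine Or.inl ⟨h, ?_⟩
            simp only [Set.mem_insert_iff, Set.mem_singleton_iff] at hv ⊢
            tauto
    have hbD : b ∉ D := by
      simp [hD, hba.symm]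
    have hcD : c ∉ D := by
      simp [hD, hca.symm]
    have hDmin : IsMinimalVertexCover G D := by
      refine ⟨hDcov, ?_⟩
      intro E hE hEcov
      have haE : a ∈ E := by
        rcases hEcov hab with h | h
        · exact h
        · exact absurd (hE.1 h) hbD
      set E' : Set (Fin n) := (E \ {a}) ∪ {b, c} with hE'
      have hE'cov : IsVertexCover G E' := by
        intro u v huv
        by_cases hu : u ∈ ({a, b, c} : Set (Fin n))
        · rcases edge_triple u v huv hu with ⟨_, hv⟩ | ⟨_, hu'⟩
          · right; rcases hv with h | h <;> simp [hE', h]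
          · left; rcases hu' with h | h <;> simp [hE', h]
        · by_cases hv : v ∈ ({a, b, c} : Set (Fin n))
          · rcases edge_triple v u huv.symm hv with ⟨_, hu'⟩ | ⟨_, hv'⟩
            · left; rcases hu' with h | h <;> simp [hE', h]
            · right; rcases hv' with h | h <;> simp [hE', h]
          · rcases hEcov huv with h | h
            · left
              refine Or.inl ⟨h, ?_⟩
              simp only [Set.mem_singleton_iff]
              intro hh; exact hu (Or.inl hh)
            · right
              refine Or.inl ⟨h, ?_⟩
              simp only [Set.mem_singleton_iff]
              intro hh; exact hv (Or.inl hh)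
      have hE'sub : E' ⊂ C := by
        obtain ⟨x, hxD, hxE⟩ := Set.exists_of_ssubset hE
        have hxa : x ≠ a := fun hh => hxE (hh ▸ haE)
        have hxC : x ∈ C \ {b, c} := by
          rcases hxD with h | h
          · exact h
          · exact absurd h (by simpa using hxa)
        constructor
        · intro y hy
          rcases hy with ⟨hyE, hya⟩ | hy
          · have hyD : y ∈ D := hE.1 hyE
            rcases hyD with h | h
            · exact h.1
            · exact absurd h (by simpa using hya)
          · rcases hy with h | h
            · exact h ▸ hbC
            · exact h ▸ hcC
        · intro hsub
          have : x ∈ E' := hsub hxC.1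
          rcases this with ⟨hxE', _⟩ | hx
          · exact hxE hxE'
          · exact hxC.2 hx
      exact hCmin E' hE'sub hE'cov
    refine ⟨C, D, ⟨hCcov, hCmin⟩, hDmin, ?_⟩
    have hsubC : ({b, c} : Set (Fin n)) ⊆ C := by
      rintro x (h | h)
      · exact h ▸ hbC
      · exact h ▸ hcC
    have h2C : 2 ≤ C.ncard := by
      have := Set.ncard_le_ncard hsubC (Set.toFinite C)
      rwa [Set.ncard_pair hbc] at this
    have hdisj : Disjoint (C \ {b, c}) ({a} : Set (Fin n)) := by
      rw [Set.disjoint_right]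
      rintro x h hx
      simp only [Set.mem_singleton_iff] at h
      exact haC (h ▸ hx.1)
    have hDcard : D.ncard = C.ncard - 1 := by
      rw [hD, Set.ncard_union_eq hdisj (Set.toFinite _) (Set.toFinite _)]
      rw [Set.ncard_diff hsubC (Set.toFinite _)]
      rw [Set.ncard_pair hbc, Set.ncard_singleton]
      omega
    omega


section Events

variable {n : ℕ}

/-- vertex set of a triple -/
def Vt (t : Fin 3 ↪ Fin n) : Finset (Fin n) := {t 0, t 1, t 2}

/-- edges meeting the triple -/
def St (t : Fin 3 ↪ Fin n) : Finset (EI n) :=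
  univ.filter (fun e => ∃ x ∈ Vt t, x ∈ e.1)

lemma emb_ne (t : Fin 3 ↪ Fin n) {i j : Fin 3} (h : i ≠ j) : t i ≠ t j :=
  fun hh => h (t.injective hh)

lemma not_diag_01 (t : Fin 3 ↪ Fin n) : ¬ (s(t 0, t 1) : Sym2 (Fin n)).IsDiag := by
  simp [emb_ne t (show (0:Fin 3) ≠ 1 by decide)]

lemma not_diag_02 (t : Fin 3 ↪ Fin n) : ¬ (s(t 0, t 2) : Sym2 (Fin n)).IsDiag := by
  simp [emb_ne t (show (0:Fin 3) ≠ 2 by decide)]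

/-- the two cherry edges -/
def Eab (t : Fin 3 ↪ Fin n) : EI n := ⟨s(t 0, t 1), not_diag_01 t⟩
def Eac (t : Fin 3 ↪ Fin n) : EI n := ⟨s(t 0, t 2), not_diag_02 t⟩

/-- prescribed values: cherry edges present, everything else touching the triple absent -/
def vt (t : Fin 3 ↪ Fin n) (e : EI n) : Bool :=
  decide (e.1 = s(t 0, t 1) ∨ e.1 = s(t 0, t 2))

/-- the event that the triple forms a cherry component centred at `t 0` -/
def At (t : Fin 3 ↪ Fin n) : Set (EI n → Bool) := cyl (St t) (vt t)

lemma mem_St {t : Fin 3 ↪ Fin n} {e : EI n} : e ∈ St t ↔ ∃ x ∈ Vt t, x ∈ e.1 := by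
  simp [St]

lemma mem_Vt {t : Fin 3 ↪ Fin n} {x : Fin n} : x ∈ Vt t ↔ x = t 0 ∨ x = t 1 ∨ x = t 2 := by
  simp [Vt]

lemma vt_eq_true_iff {t : Fin 3 ↪ Fin n} {e : EI n} :
    vt t e = true ↔ (e.1 = s(t 0, t 1) ∨ e.1 = s(t 0, t 2)) := by
  simp [vt]

lemma Eab_mem_St (t : Fin 3 ↪ Fin n) : Eab t ∈ St t := by
  rw [mem_St]
  exact ⟨t 0, mem_Vt.2 (Or.inl rfl), by simp [Eab]⟩

lemma Eac_mem_St (t : Fin 3 ↪ Fin n) : Eac t ∈ St t := by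
  rw [mem_St]
  exact ⟨t 0, mem_Vt.2 (Or.inl rfl), by simp [Eac]⟩

lemma Eab_ne_Eac (t : Fin 3 ↪ Fin n) : Eab t ≠ Eac t := by
  intro h
  have h2 : (s(t 0, t 1) : Sym2 (Fin n)) = s(t 0, t 2) := congrArg Subtype.val h
  rw [Sym2.eq_iff] at h2
  rcases h2 with ⟨_, h12⟩ | ⟨h02, _⟩
  · exact emb_ne t (show (1:Fin 3) ≠ 2 by decide) h12
  · exact emb_ne t (show (0:Fin 3) ≠ 2 by decide) h02

lemma card_F_le (x : Fin n) : #(univ.filter (fun e : EI n => x ∈ e.1)) ≤ n := by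
  classical
  have h := Finset.card_le_card_of_injOn
    (f := fun e : EI n => if h : x ∈ e.1 then Sym2.Mem.other h else x)
    (s := univ.filter (fun e : EI n => x ∈ e.1)) (t := (univ : Finset (Fin n)))
    (fun _ _ => Finset.mem_univ _) ?_
  · simpa using h
  · intro e1 he1 e2 he2 heq
    rw [Finset.mem_coe, Finset.mem_filter] at he1 he2
    have heq2 : (if h : x ∈ e1.1 then Sym2.Mem.other h else x)
        = (if h : x ∈ e2.1 then Sym2.Mem.other h else x) := heq
    rw [dif_pos he1.2, dif_pos he2.2] at heq2
    apply Subtype.ext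
    rw [← Sym2.other_spec he1.2, ← Sym2.other_spec he2.2, heq2]

lemma card_St_le (t : Fin 3 ↪ Fin n) : #(St t) ≤ 3 * n := by
  classical
  have hsub : St t ⊆ (univ.filter (fun e : EI n => t 0 ∈ e.1))
      ∪ ((univ.filter (fun e : EI n => t 1 ∈ e.1))
      ∪ (univ.filter (fun e : EI n => t 2 ∈ e.1))) := by
    intro e he
    rw [mem_St] at he
    obtain ⟨x, hx, hxe⟩ := he
    rw [mem_Vt] at hx
    simp only [Finset.mem_union, Finset.mem_filter, Finset.mem_univ, true_and]
    rcases hx with h | h | h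
    · exact Or.inl (h ▸ hxe)
    · exact Or.inr (Or.inl (h ▸ hxe))
    · exact Or.inr (Or.inr (h ▸ hxe))
  calc #(St t) ≤ _ := Finset.card_le_card hsub
    _ ≤ _ + _ := Finset.card_union_le _ _
    _ ≤ #(univ.filter (fun e : EI n => t 0 ∈ e.1)) +
        (#(univ.filter (fun e : EI n => t 1 ∈ e.1)) +
         #(univ.filter (fun e : EI n => t 2 ∈ e.1))) := by
        gcongr
        exact Finset.card_union_le _ _
    _ ≤ n + (n + n) := by
        gcongr <;> exact card_F_le _
    _ = 3 * n := by ring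

lemma St_filter_true (t : Fin 3 ↪ Fin n) :
    (St t).filter (fun e => vt t e = true) = {Eab t, Eac t} := by
  ext e
  rw [Finset.mem_filter, mem_St, vt_eq_true_iff]
  constructor
  · rintro ⟨_, h | h⟩
    · exact Finset.mem_insert.2 (Or.inl (Subtype.ext h))
    · exact Finset.mem_insert.2 (Or.inr (Finset.mem_singleton.2 (Subtype.ext h)))
  · intro h
    rcases Finset.mem_insert.1 h with h | h
    · subst h
      refine ⟨⟨t 0, mem_Vt.2 (Or.inl rfl), by simp [Eab]⟩, Or.inl rfl⟩
    · rw [Finset.mem_singleton] at h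
      subst h
      refine ⟨⟨t 0, mem_Vt.2 (Or.inl rfl), by simp [Eac]⟩, Or.inr rfl⟩

lemma Pb_At_ge {p : ℝ} (hp0 : 0 ≤ p) (hp1 : p ≤ 1) (t : Fin 3 ↪ Fin n) :
    p ^ 2 * (1 - p) ^ (3 * n) ≤ Pb p (At t) := by
  classical
  rw [At, Pb_cyl]
  have hsplit : ∏ e ∈ St t, w p (vt t e)
      = p ^ #((St t).filter (fun e => vt t e = true))
        * (1 - p) ^ #((St t).filter (fun e => ¬ vt t e = true)) := by
    rw [show (fun e => w p (vt t e)) = fun e => if vt t e = true then p else 1 - p from by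
      funext e; cases h : vt t e <;> simp [w, h]]
    rw [Finset.prod_ite _ _]
    simp
  rw [hsplit, St_filter_true, Finset.card_pair (Eab_ne_Eac t)]
  have hm : #((St t).filter (fun e => ¬ vt t e = true)) ≤ 3 * n :=
    le_trans (Finset.card_le_card (Finset.filter_subset _ _)) (card_St_le t)
  have h1p : 0 ≤ 1 - p := by linarith
  have := pow_le_pow_of_le_one h1p (by linarith) hm
  exact mul_le_mul_of_nonneg_left this (by positivity)

end Events

section Events2

variable {n : ℕ}

/-- swap the two leaves of a cherry triple -/
def stw (t : Fin 3 ↪ Fin n) : Fin 3 ↪ Fin n :=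
  (Equiv.swap (1 : Fin 3) 2).toEmbedding.trans t

lemma stw_0 (t : Fin 3 ↪ Fin n) : stw t 0 = t 0 := by
  simp [stw, Equiv.swap_apply_of_ne_of_ne]

lemma stw_1 (t : Fin 3 ↪ Fin n) : stw t 1 = t 2 := by simp [stw]

lemma stw_2 (t : Fin 3 ↪ Fin n) : stw t 2 = t 1 := by simp [stw]

lemma Vt_stw (t : Fin 3 ↪ Fin n) : Vt (stw t) = Vt t := by
  simp only [Vt, stw_0, stw_1, stw_2]
  ext x
  simp only [Finset.mem_insert, Finset.mem_singleton]
  tauto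

lemma At_stw (t : Fin 3 ↪ Fin n) : At (stw t) = At t := by
  have hS : St (stw t) = St t := by
    simp only [St, Vt_stw]
  have hv : vt (stw t) = vt t := by
    funext e
    simp only [vt, stw_0, stw_1, stw_2]
    exact decide_eq_decide.2 or_comm
  rw [At, At, hS, hv]

lemma stw_ne (t : Fin 3 ↪ Fin n) : stw t ≠ t := by
  intro h
  have : stw t 1 = t 1 := by rw [h]
  rw [stw_1] at this
  exact emb_ne t (show (2:Fin 3) ≠ 1 by decide) this

/-- a configuration in `At t` means: an edge touching the triple is present iff it is
one of the two cherry edges -/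
lemma At_spec {t : Fin 3 ↪ Fin n} {f : EI n → Bool} (hf : f ∈ At t) :
    ∀ e : EI n, (∃ x ∈ Vt t, x ∈ e.1) →
      (f e = true ↔ (e.1 = s(t 0, t 1) ∨ e.1 = s(t 0, t 2))) := by
  intro e he
  have h1 : f e = vt t e := hf e (mem_St.2 he)
  rw [h1, vt_eq_true_iff]

/-- if two cherry events on triples with intersecting vertex sets are simultaneously
realizable, the triples agree up to the leaf swap -/
lemma overlap_cases {t t' : Fin 3 ↪ Fin n} {f : EI n → Bool}
    (hf : f ∈ At t) (hf' : f ∈ At t')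
    (hint : ¬ Disjoint (Vt t) (Vt t')) : t' = t ∨ t' = stw t := by
  classical
  obtain ⟨x, hxt, hxt'⟩ := Finset.not_disjoint_iff.1 hint
  -- the two cherry edges of t are present
  have hab : f (Eab t) = true := by
    rw [At_spec hf _ ⟨t 0, mem_Vt.2 (Or.inl rfl), by simp [Eab]⟩]
    exact Or.inl rfl
  have hac : f (Eac t) = true := by
    rw [At_spec hf _ ⟨t 0, mem_Vt.2 (Or.inl rfl), by simp [Eac]⟩]
    exact Or.inr rfl
  have hab' : f (Eab t') = true := by
    rw [At_spec hf' _ ⟨t' 0, mem_Vt.2 (Or.inl rfl), by simp [Eab]⟩]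
    exact Or.inl rfl
  have hac' : f (Eac t') = true := by
    rw [At_spec hf' _ ⟨t' 0, mem_Vt.2 (Or.inl rfl), by simp [Eac]⟩]
    exact Or.inr rfl
  -- if a present edge touches Vt t', both its endpoints lie in Vt t'
  have spread : ∀ e : EI n, f e = true → (∃ y ∈ Vt t', y ∈ e.1) →
      ∀ z, z ∈ e.1 → z ∈ Vt t' := by
    intro e hfe hy z hz
    have := (At_spec hf' e hy).1 hfe
    rcases this with h | h <;> rw [h] at hz <;> rw [Sym2.mem_iff] at hz <;>
      rcases hz with h2 | h2 <;> rw [h2] <;> rw [mem_Vt] <;> tauto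
  have spread' : ∀ e : EI n, f e = true → (∃ y ∈ Vt t, y ∈ e.1) →
      ∀ z, z ∈ e.1 → z ∈ Vt t := by
    intro e hfe hy z hz
    have := (At_spec hf e hy).1 hfe
    rcases this with h | h <;> rw [h] at hz <;> rw [Sym2.mem_iff] at hz <;>
      rcases hz with h2 | h2 <;> rw [h2] <;> rw [mem_Vt] <;> tauto
  -- step 1: t 0 ∈ Vt t'
  have h0mem : t 0 ∈ Vt t' := by
    rcases mem_Vt.1 hxt with h | h | h
    · exact h ▸ hxt'
    · -- x = t 1 : use the edge s(t 0, t 1)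
      exact spread (Eab t) hab ⟨x, hxt', by simp [Eab, h]⟩ (t 0) (by simp [Eab])
    · exact spread (Eac t) hac ⟨x, hxt', by simp [Eac, h]⟩ (t 0) (by simp [Eac])
  have h1mem : t 1 ∈ Vt t' :=
    spread (Eab t) hab ⟨t 0, h0mem, by simp [Eab]⟩ (t 1) (by simp [Eab])
  have h2mem : t 2 ∈ Vt t' :=
    spread (Eac t) hac ⟨t 0, h0mem, by simp [Eac]⟩ (t 2) (by simp [Eac])
  -- hence Vt t = Vt t' (both have three elements)
  have hcard : (Vt t').card ≤ 3 := by
    rw [Vt]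
    exact le_trans (Finset.card_insert_le _ _)
      (by simpa using Finset.card_insert_le (t' 1) ({t' 2} : Finset (Fin n)))
  have hsub : Vt t ⊆ Vt t' := by
    intro y hy
    rcases mem_Vt.1 hy with h | h | h <;> rw [h] <;> assumption
  have hcardt : (Vt t).card = 3 := by
    rw [Vt, Finset.card_insert_of_notMem, Finset.card_insert_of_notMem, Finset.card_singleton]
    · simp [emb_ne t (show (1:Fin 3) ≠ 2 by decide)]
    · simp [emb_ne t (show (0:Fin 3) ≠ 1 by decide), emb_ne t (show (0:Fin 3) ≠ 2 by decide)]
  have hVeq : Vt t = Vt t' := Finset.eq_of_subset_of_card_le hsub (by omega)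
  -- step 2 : t' 0 = t 0
  have h0eq : t' 0 = t 0 := by
    by_contra hne0
    have h0' : t' 0 ∈ Vt t := hVeq ▸ mem_Vt.2 (Or.inl rfl)
    -- so t' 0 = t 1 or t' 0 = t 2; in both cases one of the present edges of t'
    -- is the absent edge s(t 1, t 2), or forces a contradiction
    have hkey : ∀ e : EI n, f e = true → (∃ y ∈ Vt t, y ∈ e.1) →
        (e.1 = s(t 0, t 1) ∨ e.1 = s(t 0, t 2)) := fun e hfe hy => (At_spec hf e hy).1 hfe
    -- t' 1 and t' 2 are in Vt t
    have h1' : t' 1 ∈ Vt t := hVeq ▸ mem_Vt.2 (Or.inr (Or.inl rfl))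
    have h2' : t' 2 ∈ Vt t := hVeq ▸ mem_Vt.2 (Or.inr (Or.inr rfl))
    -- the edge s(t' 0, t' 1) is present and touches Vt t
    have e1 := hkey (Eab t') hab' ⟨t' 0, h0', by simp [Eab]⟩
    have e2 := hkey (Eac t') hac' ⟨t' 0, h0', by simp [Eac]⟩
    -- t 0 ∈ each cherry edge of t'; so t 0 ∈ {t' 0, t' 1} and t 0 ∈ {t' 0, t' 2}
    have hmem1 : t 0 ∈ (Eab t' : EI n).1 := by
      rcases e1 with h | h <;> rw [show ((Eab t' : EI n).1) = _ from h] <;> simp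
    have hmem2 : t 0 ∈ (Eac t' : EI n).1 := by
      rcases e2 with h | h <;> rw [show ((Eac t' : EI n).1) = _ from h] <;> simp
    simp only [Eab, Eac, Sym2.mem_iff] at hmem1 hmem2
    rcases hmem1 with h1 | h1
    · exact hne0 h1.symm
    rcases hmem2 with h2 | h2
    · exact hne0 h2.symm
    -- t 0 = t' 1 and t 0 = t' 2 : impossible
    exact emb_ne t' (show (1:Fin 3) ≠ 2 by decide) (h1 ▸ h2 ▸ rfl)
  -- step 3 : {t' 1, t' 2} = {t 1, t 2}
  have h1' : t' 1 ∈ Vt t := hVeq ▸ mem_Vt.2 (Or.inr (Or.inl rfl))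
  have h2' : t' 2 ∈ Vt t := hVeq ▸ mem_Vt.2 (Or.inr (Or.inr rfl))
  have h1ne : t' 1 ≠ t 0 := fun h => emb_ne t' (show (1:Fin 3) ≠ 0 by decide) (h.trans h0eq.symm)
  have h2ne : t' 2 ≠ t 0 := fun h => emb_ne t' (show (2:Fin 3) ≠ 0 by decide) (h.trans h0eq.symm)
  have h1cases : t' 1 = t 1 ∨ t' 1 = t 2 := by
    rcases mem_Vt.1 h1' with h | h | h
    · exact absurd h h1ne
    · exact Or.inl h
    · exact Or.inr h
  have h2cases : t' 2 = t 1 ∨ t' 2 = t 2 := by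
    rcases mem_Vt.1 h2' with h | h | h
    · exact absurd h h2ne
    · exact Or.inl h
    · exact Or.inr h
  have hne12 : t' 1 ≠ t' 2 := emb_ne t' (by decide)
  rcases h1cases with ha | ha <;> rcases h2cases with hb | hb
  · exact absurd (ha.trans hb.symm) hne12
  · -- t' = t
    left
    apply DFunLike.ext
    intro i
    fin_cases i
    · exact h0eq
    · exact ha
    · exact hb
  · -- t' = stw t
    right
    apply DFunLike.ext
    intro i
    fin_cases i
    · show t' 0 = stw t 0
      rw [stw_0]; exact h0eq
    · show t' 1 = stw t 1
      rw [stw_1]; exact ha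
    · show t' 2 = stw t 2
      rw [stw_2]; exact hb
  · exact absurd (ha.trans hb.symm) hne12

lemma At_overlap_empty {t t' : Fin 3 ↪ Fin n}
    (hint : ¬ Disjoint (Vt t) (Vt t')) (h1 : t' ≠ t) (h2 : t' ≠ stw t) :
    At t ∩ At t' = ∅ := by
  ext f
  simp only [Set.mem_inter_iff, Set.mem_empty_iff_false, iff_false, not_and]
  intro hf hf'
  rcases overlap_cases hf hf' hint with h | h
  · exact h1 h
  · exact h2 h

end Events2

section Events3

variable {n : ℕ}

lemma w_nonneg {p : ℝ} (hp0 : 0 ≤ p) (hp1 : p ≤ 1) (b : Bool) : 0 ≤ w p b := by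
  cases b <;> simp [w] <;> linarith

lemma card_Vt_le (t : Fin 3 ↪ Fin n) : #(Vt t) ≤ 3 := by
  rw [Vt]
  exact le_trans (Finset.card_insert_le _ _)
    (by simpa using Finset.card_insert_le (t 1) ({t 2} : Finset (Fin n)))

lemma vt_both_mem {t : Fin 3 ↪ Fin n} {e : EI n} (h : vt t e = true) :
    ∀ z ∈ e.1, z ∈ Vt t := by
  rw [vt_eq_true_iff] at h
  intro z hz
  rcases h with h | h <;> rw [h, Sym2.mem_iff] at hz <;> rcases hz with h2 | h2 <;>
    rw [h2, mem_Vt] <;> tauto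

lemma vt_false_of_mem_other {t t' : Fin 3 ↪ Fin n} (hdisj : Disjoint (Vt t) (Vt t'))
    {e : EI n} (he : e ∈ St t') : vt t e = false := by
  by_contra hcon
  rw [Bool.not_eq_false] at hcon
  obtain ⟨y, hy, hye⟩ := mem_St.1 he
  have : y ∈ Vt t := vt_both_mem hcon y hye
  exact Finset.disjoint_left.1 hdisj this hy

lemma At_inter_disjoint {t t' : Fin 3 ↪ Fin n} (hdisj : Disjoint (Vt t) (Vt t')) :
    At t ∩ At t' = cyl (St t ∪ St t') (fun e => vt t e || vt t' e) := by
  ext f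
  simp only [Set.mem_inter_iff]
  constructor
  · rintro ⟨h1, h2⟩ e he
    rcases Finset.mem_union.1 he with h | h
    · show f e = (vt t e || vt t' e)
      rw [vt_false_of_mem_other hdisj.symm h, Bool.or_false]
      exact h1 e h
    · show f e = (vt t e || vt t' e)
      rw [vt_false_of_mem_other hdisj h, Bool.false_or]
      exact h2 e h
  · intro h
    refine ⟨fun e he => ?_, fun e he => ?_⟩
    · have h2 : f e = (vt t e || vt t' e) := h e (Finset.mem_union_left _ he)
      rwa [vt_false_of_mem_other hdisj.symm he, Bool.or_false] at h2
    · have h2 : f e = (vt t e || vt t' e) := h e (Finset.mem_union_right _ he)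
      rwa [vt_false_of_mem_other hdisj he, Bool.false_or] at h2

lemma card_St_inter_le {t t' : Fin 3 ↪ Fin n} (hdisj : Disjoint (Vt t) (Vt t')) :
    #(St t ∩ St t') ≤ 9 := by
  classical
  set g : EI n → Fin n × Fin n := fun e =>
    if h : (∃ x ∈ Vt t, x ∈ e.1) ∧ (∃ y ∈ Vt t', y ∈ e.1)
    then (h.1.choose, h.2.choose) else (t 0, t 0) with hg
  have hspec : ∀ e ∈ St t ∩ St t', (g e ∈ Vt t ×ˢ Vt t') ∧ e.1 = s((g e).1, (g e).2) := by
    intro e he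
    rw [Finset.mem_inter, mem_St, mem_St] at he
    have hh : (∃ x ∈ Vt t, x ∈ e.1) ∧ (∃ y ∈ Vt t', y ∈ e.1) := he
    rw [hg]
    simp only [dif_pos hh]
    obtain ⟨hx1, hx2⟩ := hh.1.choose_spec
    obtain ⟨hy1, hy2⟩ := hh.2.choose_spec
    have hne : hh.1.choose ≠ hh.2.choose := by
      intro hcon
      exact Finset.disjoint_left.1 hdisj hx1 (hcon ▸ hy1)
    refine ⟨Finset.mk_mem_product hx1 hy1, ?_⟩
    exact ((Sym2.mem_and_mem_iff hne).1 ⟨hx2, hy2⟩)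
  have h1 : #(St t ∩ St t') ≤ #(Vt t ×ˢ Vt t') := by
    apply Finset.card_le_card_of_injOn g
    · intro e he
      exact (hspec e he).1
    · intro e1 he1 e2 he2 heq
      rw [Finset.mem_coe] at he1 he2
      apply Subtype.ext
      rw [(hspec e1 he1).2, (hspec e2 he2).2, heq]
  calc #(St t ∩ St t') ≤ #(Vt t ×ˢ Vt t') := h1
    _ = #(Vt t) * #(Vt t') := Finset.card_product _ _
    _ ≤ 3 * 3 := Nat.mul_le_mul (card_Vt_le t) (card_Vt_le t')
    _ = 9 := rfl

lemma Pb_pair_le {p : ℝ} (hp0 : 0 ≤ p) (hp1 : p ≤ 1) {t t' : Fin 3 ↪ Fin n}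
    (hdisj : Disjoint (Vt t) (Vt t')) :
    (1 - p) ^ 9 * Pb p (At t ∩ At t') ≤ Pb p (At t) * Pb p (At t') := by
  classical
  rw [At_inter_disjoint hdisj, Pb_cyl, At, At, Pb_cyl, Pb_cyl]
  have key : (∏ e ∈ St t ∪ St t', w p (vt t e || vt t' e))
      * (∏ e ∈ St t ∩ St t', w p (vt t e || vt t' e))
      = (∏ e ∈ St t, w p (vt t e)) * ∏ e ∈ St t', w p (vt t' e) := by
    rw [Finset.prod_union_inter]
    congr 1
    · exact Finset.prod_congr rfl fun e he => by
        rw [vt_false_of_mem_other hdisj.symm he, Bool.or_false]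
    · exact Finset.prod_congr rfl fun e he => by
        rw [vt_false_of_mem_other hdisj he, Bool.false_or]
  have hinter : (∏ e ∈ St t ∩ St t', w p (vt t e || vt t' e))
      = (1 - p) ^ #(St t ∩ St t') := by
    rw [Finset.prod_congr rfl (fun e he => ?_), Finset.prod_const]
    rw [vt_false_of_mem_other hdisj (Finset.mem_inter.1 he).2,
      vt_false_of_mem_other hdisj.symm (Finset.mem_inter.1 he).1]
    rfl
  have hunion_nonneg : 0 ≤ ∏ e ∈ St t ∪ St t', w p (vt t e || vt t' e) :=
    Finset.prod_nonneg fun e _ => w_nonneg hp0 hp1 _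
  have h1p : 0 ≤ 1 - p := by linarith
  have hpow : (1 - p) ^ 9 ≤ (1 - p) ^ #(St t ∩ St t') :=
    pow_le_pow_of_le_one h1p (by linarith) (card_St_inter_le hdisj)
  calc (1 - p) ^ 9 * ∏ e ∈ St t ∪ St t', w p (vt t e || vt t' e)
      ≤ (1 - p) ^ #(St t ∩ St t') * ∏ e ∈ St t ∪ St t', w p (vt t e || vt t' e) :=
        mul_le_mul_of_nonneg_right hpow hunion_nonneg
    _ = _ := by rw [← hinter, mul_comm, key]

end Events3

section Moments

variable {n : ℕ}

/-- expected number of cherries (sum of cherry probabilities) -/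
noncomputable def E1 (n : ℕ) (p : ℝ) : ℝ := ∑ t : Fin 3 ↪ Fin n, Pb p (At t)

noncomputable def E2 (n : ℕ) (p : ℝ) : ℝ :=
  ∑ t : Fin 3 ↪ Fin n, ∑ t' : Fin 3 ↪ Fin n, Pb p (At t ∩ At t')

/-- the union event: some cherry component exists -/
def Bev (n : ℕ) : Set (EI n → Bool) := {f | ∃ t : Fin 3 ↪ Fin n, f ∈ At t}

/-- number of cherries in a configuration -/
noncomputable def Xc (n : ℕ) (f : EI n → Bool) : ℝ :=
  ∑ t : Fin 3 ↪ Fin n, (At t).indicator (fun _ => (1:ℝ)) f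

lemma Xc_nonneg (f : EI n → Bool) : 0 ≤ Xc n f :=
  Finset.sum_nonneg fun t _ => Set.indicator_nonneg (fun _ _ => zero_le_one) f

lemma bw_mul_indicator {p : ℝ} (A : Set (EI n → Bool)) (f : EI n → Bool) :
    bw p f * A.indicator (fun _ => (1:ℝ)) f = A.indicator (bw p) f := by
  classical
  by_cases h : f ∈ A
  · rw [Set.indicator_of_mem h, Set.indicator_of_mem h, mul_one]
  · rw [Set.indicator_of_notMem h, Set.indicator_of_notMem h, mul_zero]

lemma E1_eq (p : ℝ) : E1 n p = ∑ f : EI n → Bool, bw p f * Xc n f := by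
  rw [E1]
  have : ∀ f : EI n → Bool, bw p f * Xc n f
      = ∑ t : Fin 3 ↪ Fin n, (At t).indicator (bw p) f := by
    intro f
    rw [Xc, Finset.mul_sum]
    exact Finset.sum_congr rfl fun t _ => bw_mul_indicator _ f
  rw [Finset.sum_congr rfl fun f _ => this f, Finset.sum_comm]
  rfl

lemma indicator_mul_indicator {A B : Set (EI n → Bool)} (f : EI n → Bool) :
    A.indicator (fun _ => (1:ℝ)) f * B.indicator (fun _ => (1:ℝ)) f
      = (A ∩ B).indicator (fun _ => (1:ℝ)) f := by
  classical
  by_cases hA : f ∈ A <;> by_cases hB : f ∈ B <;>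
    simp [Set.indicator_apply, hA, hB, Set.mem_inter_iff]

lemma E2_eq (p : ℝ) : E2 n p = ∑ f : EI n → Bool, bw p f * (Xc n f) ^ 2 := by
  classical
  have key : ∀ f : EI n → Bool, bw p f * (Xc n f) ^ 2
      = ∑ t : Fin 3 ↪ Fin n, ∑ t' : Fin 3 ↪ Fin n, (At t ∩ At t').indicator (bw p) f := by
    intro f
    rw [sq, Xc, Finset.sum_mul_sum]
    rw [Finset.mul_sum]
    refine Finset.sum_congr rfl fun t _ => ?_
    rw [Finset.mul_sum]
    refine Finset.sum_congr rfl fun t' _ => ?_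
    by_cases hA : f ∈ At t <;> by_cases hB : f ∈ At t' <;>
      simp [Set.indicator_apply, hA, hB, Set.mem_inter_iff]
  calc E2 n p = ∑ t : Fin 3 ↪ Fin n, ∑ t' : Fin 3 ↪ Fin n, ∑ f : EI n → Bool,
        (At t ∩ At t').indicator (bw p) f := rfl
    _ = ∑ t : Fin 3 ↪ Fin n, ∑ f : EI n → Bool, ∑ t' : Fin 3 ↪ Fin n,
        (At t ∩ At t').indicator (bw p) f :=
        Finset.sum_congr rfl fun t _ => Finset.sum_comm
    _ = ∑ f : EI n → Bool, ∑ t : Fin 3 ↪ Fin n, ∑ t' : Fin 3 ↪ Fin n,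
        (At t ∩ At t').indicator (bw p) f := Finset.sum_comm
    _ = ∑ f : EI n → Bool, bw p f * (Xc n f) ^ 2 :=
        Finset.sum_congr rfl fun f _ => (key f).symm

lemma cauchy_schwarz {p : ℝ} (hp0 : 0 ≤ p) (hp1 : p ≤ 1) :
    (E1 n p) ^ 2 ≤ Pb p (Bev n) * E2 n p := by
  classical
  have hbw : ∀ f : EI n → Bool, 0 ≤ bw p f := fun f => bw_nonneg hp0 hp1 f
  have hCS := Finset.sum_mul_sq_le_sq_mul_sq Finset.univ
    (fun f : EI n → Bool => Real.sqrt (bw p f) * (Bev n).indicator (fun _ => (1:ℝ)) f)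
    (fun f : EI n → Bool => Real.sqrt (bw p f) * Xc n f)
  have h1 : ∀ f : EI n → Bool,
      (Real.sqrt (bw p f) * (Bev n).indicator (fun _ => (1:ℝ)) f)
        * (Real.sqrt (bw p f) * Xc n f) = bw p f * Xc n f := by
    intro f
    have hs : Real.sqrt (bw p f) * Real.sqrt (bw p f) = bw p f := Real.mul_self_sqrt (hbw f)
    by_cases h : f ∈ Bev n
    · rw [Set.indicator_of_mem h, mul_one, ← mul_assoc, hs]
    · have hX : Xc n f = 0 := by
        rw [Xc]
        refine Finset.sum_eq_zero fun t _ => ?_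
        have : f ∉ At t := fun hc => h ⟨t, hc⟩
        rw [Set.indicator_of_notMem this]
      rw [hX, mul_zero, mul_zero, mul_zero]
  have h2 : ∀ f : EI n → Bool,
      (Real.sqrt (bw p f) * (Bev n).indicator (fun _ => (1:ℝ)) f) ^ 2
        = (Bev n).indicator (bw p) f := by
    intro f
    rw [mul_pow, Real.sq_sqrt (hbw f)]
    by_cases h : f ∈ Bev n
    · rw [Set.indicator_of_mem h, Set.indicator_of_mem h]
      ring
    · rw [Set.indicator_of_notMem h, Set.indicator_of_notMem h]
      ring
  have h3 : ∀ f : EI n → Bool,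
      (Real.sqrt (bw p f) * Xc n f) ^ 2 = bw p f * (Xc n f) ^ 2 := by
    intro f
    rw [mul_pow, Real.sq_sqrt (hbw f)]
  rw [Finset.sum_congr rfl fun f _ => h1 f] at hCS
  rw [Finset.sum_congr rfl fun f _ => h2 f] at hCS
  rw [Finset.sum_congr rfl fun f _ => h3 f] at hCS
  rw [E1_eq, E2_eq]
  exact hCS

lemma E2_le {p : ℝ} (hp0 : 0 ≤ p) (hp1 : p ≤ 1) :
    (1 - p) ^ 9 * E2 n p ≤ 2 * E1 n p + (E1 n p) ^ 2 := by
  classical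
  have h1p : (0:ℝ) ≤ 1 - p := by linarith
  have hPb : ∀ A : Set (EI n → Bool), 0 ≤ Pb p A := fun A => Pb_nonneg hp0 hp1 A
  have point : ∀ t t' : Fin 3 ↪ Fin n,
      (1 - p) ^ 9 * Pb p (At t ∩ At t')
        ≤ (if t' = t ∨ t' = stw t then Pb p (At t) else 0) + Pb p (At t) * Pb p (At t') := by
    intro t t'
    by_cases hd : Disjoint (Vt t) (Vt t')
    · refine le_trans (Pb_pair_le hp0 hp1 hd) ?_
      have : (0:ℝ) ≤ if t' = t ∨ t' = stw t then Pb p (At t) else 0 := by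
        by_cases h : t' = t ∨ t' = stw t
        · rw [if_pos h]; exact hPb _
        · rw [if_neg h]
      linarith
    · by_cases he : t' = t ∨ t' = stw t
      · rw [if_pos he]
        have hAeq : At t ∩ At t' = At t := by
          rcases he with h | h
          · rw [h, Set.inter_self]
          · rw [h, At_stw, Set.inter_self]
        rw [hAeq]
        have h9 : (1 - p) ^ 9 ≤ 1 := pow_le_one₀ h1p (by linarith)
        nlinarith [hPb (At t), hPb (At t'), mul_nonneg (hPb (At t)) (hPb (At t'))]
      · push_neg at he
        rw [At_overlap_empty hd he.1 he.2, Pb_empty, mul_zero, if_neg (not_or.2 he)]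
        have := mul_nonneg (hPb (At t)) (hPb (At t'))
        linarith
  have hsum : ∀ t : Fin 3 ↪ Fin n,
      ∑ t' : Fin 3 ↪ Fin n, (if t' = t ∨ t' = stw t then Pb p (At t) else 0)
        ≤ 2 * Pb p (At t) := by
    intro t
    rw [← Finset.sum_filter]
    have hfil : (Finset.univ.filter (fun t' : Fin 3 ↪ Fin n => t' = t ∨ t' = stw t))
        ⊆ {t, stw t} := by
      intro x hx
      rw [Finset.mem_filter] at hx
      rcases hx.2 with h | h
      · exact Finset.mem_insert.2 (Or.inl h)
      · exact Finset.mem_insert.2 (Or.inr (Finset.mem_singleton.2 h))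
    have h2' : #({t, stw t} : Finset (Fin 3 ↪ Fin n)) ≤ 2 := by
      apply le_trans (Finset.card_insert_le _ _)
      simp
    have hcard : #(Finset.univ.filter (fun t' : Fin 3 ↪ Fin n => t' = t ∨ t' = stw t)) ≤ 2 :=
      le_trans (Finset.card_le_card hfil) h2'
    rw [Finset.sum_const, nsmul_eq_mul]
    exact mul_le_mul_of_nonneg_right (by exact_mod_cast hcard) (hPb (At t))
  calc (1 - p) ^ 9 * E2 n p
      = ∑ t : Fin 3 ↪ Fin n, ∑ t' : Fin 3 ↪ Fin n, (1 - p) ^ 9 * Pb p (At t ∩ At t') := by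
        rw [E2, Finset.mul_sum]
        exact Finset.sum_congr rfl fun t _ => Finset.mul_sum _ _ _
    _ ≤ ∑ t : Fin 3 ↪ Fin n, ∑ t' : Fin 3 ↪ Fin n,
          ((if t' = t ∨ t' = stw t then Pb p (At t) else 0) + Pb p (At t) * Pb p (At t')) :=
        Finset.sum_le_sum fun t _ => Finset.sum_le_sum fun t' _ => point t t'
    _ = ∑ t : Fin 3 ↪ Fin n, ((∑ t' : Fin 3 ↪ Fin n,
          (if t' = t ∨ t' = stw t then Pb p (At t) else 0))
          + Pb p (At t) * E1 n p) := by
        refine Finset.sum_congr rfl fun t _ => ?_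
        rw [Finset.sum_add_distrib, ← Finset.mul_sum]
        rfl
    _ ≤ ∑ t : Fin 3 ↪ Fin n, (2 * Pb p (At t) + Pb p (At t) * E1 n p) :=
        Finset.sum_le_sum fun t _ => by
          have := hsum t
          linarith
    _ = 2 * E1 n p + (E1 n p) ^ 2 := by
        rw [Finset.sum_add_distrib, ← Finset.mul_sum, ← Finset.sum_mul, ← E1, sq]

lemma card_emb : Fintype.card (Fin 3 ↪ Fin n) = n.descFactorial 3 := by
  rw [Fintype.card_embedding_eq, Fintype.card_fin, Fintype.card_fin]

lemma E1_ge {p : ℝ} (hp0 : 0 ≤ p) (hp1 : p ≤ 1) :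
    (n.descFactorial 3 : ℝ) * (p ^ 2 * (1 - p) ^ (3 * n)) ≤ E1 n p := by
  have h : ∑ _t : Fin 3 ↪ Fin n, p ^ 2 * (1 - p) ^ (3 * n) ≤ E1 n p :=
    Finset.sum_le_sum fun t _ => Pb_At_ge hp0 hp1 t
  rw [Finset.sum_const, nsmul_eq_mul, Finset.card_univ, card_emb] at h
  exact h

lemma E1_le_E2 {p : ℝ} (hp0 : 0 ≤ p) (hp1 : p ≤ 1) : E1 n p ≤ E2 n p := by
  have step : ∀ t : Fin 3 ↪ Fin n, Pb p (At t) ≤ ∑ t' : Fin 3 ↪ Fin n, Pb p (At t ∩ At t') := by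
    intro t
    have h0 : Pb p (At t ∩ At t) ≤ ∑ t' : Fin 3 ↪ Fin n, Pb p (At t ∩ At t') :=
      Finset.single_le_sum (f := fun t' : Fin 3 ↪ Fin n => Pb p (At t ∩ At t'))
        (fun t' _ => Pb_nonneg hp0 hp1 _) (Finset.mem_univ t)
    rwa [Set.inter_self] at h0
  exact Finset.sum_le_sum fun t _ => step t

end Moments

section Bridge

variable {n : ℕ}

lemma f_Eab {t : Fin 3 ↪ Fin n} {f : EI n → Bool} (hf : f ∈ At t) : f (Eab t) = true := by
  rw [At_spec hf _ ⟨t 0, mem_Vt.2 (Or.inl rfl), by simp [Eab]⟩]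
  exact Or.inl rfl

lemma f_Eac {t : Fin 3 ↪ Fin n} {f : EI n → Bool} (hf : f ∈ At t) : f (Eac t) = true := by
  rw [At_spec hf _ ⟨t 0, mem_Vt.2 (Or.inl rfl), by simp [Eac]⟩]
  exact Or.inr rfl

lemma At_to_target {t : Fin 3 ↪ Fin n} {f : EI n → Bool} (hf : f ∈ At t) :
    ∃ C D : Set (Fin n), IsMinimalVertexCover (toGraph f) C ∧
      IsMinimalVertexCover (toGraph f) D ∧ C.ncard ≠ D.ncard := by
  have hne01 := emb_ne t (show (0:Fin 3) ≠ 1 by decide)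
  have hne02 := emb_ne t (show (0:Fin 3) ≠ 2 by decide)
  have hne12 := emb_ne t (show (1:Fin 3) ≠ 2 by decide)
  apply cherry_not_unmixed (toGraph f) (t 0) (t 1) (t 2)
  · exact ⟨not_diag_01 t, f_Eab hf⟩
  · exact ⟨not_diag_02 t, f_Eac hf⟩
  · exact hne12
  · -- edges at t 1 go to t 0
    rintro x ⟨hd, hfx⟩
    have hx := (At_spec hf ⟨s(t 1, x), hd⟩
      ⟨t 1, mem_Vt.2 (Or.inr (Or.inl rfl)), by simp⟩).1 hfx
    rcases hx with h | h <;> rw [Sym2.eq_iff] at h <;>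
      rcases h with ⟨h1, h2⟩ | ⟨h1, h2⟩
    · exact absurd h1.symm hne01
    · exact h2
    · exact absurd h1.symm hne01
    · exact absurd h1 hne12
  · -- edges at t 2 go to t 0
    rintro x ⟨hd, hfx⟩
    have hx := (At_spec hf ⟨s(t 2, x), hd⟩
      ⟨t 2, mem_Vt.2 (Or.inr (Or.inr rfl)), by simp⟩).1 hfx
    rcases hx with h | h <;> rw [Sym2.eq_iff] at h <;>
      rcases h with ⟨h1, h2⟩ | ⟨h1, h2⟩
    · exact absurd h1.symm hne02
    · exact absurd h1.symm hne12
    · exact absurd h1.symm hne02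
    · exact h2
  · -- edges at t 0 go to t 1 or t 2
    rintro x ⟨hd, hfx⟩
    have hx := (At_spec hf ⟨s(t 0, x), hd⟩
      ⟨t 0, mem_Vt.2 (Or.inl rfl), by simp⟩).1 hfx
    rcases hx with h | h <;> rw [Sym2.eq_iff] at h <;>
      rcases h with ⟨h1, h2⟩ | ⟨h1, h2⟩
    · exact Or.inl h2
    · exact absurd h1 hne01
    · exact Or.inr h2
    · exact absurd h1 hne02

lemma Bev_subset :
    Bev n ⊆ toGraph ⁻¹' {G : SimpleGraph (Fin n) |
      ∃ C D : Set (Fin n), IsMinimalVertexCover G C ∧ IsMinimalVertexCover G D ∧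
        C.ncard ≠ D.ncard} := by
  rintro f ⟨t, hf⟩
  exact At_to_target hf

lemma descFactorial_three (m : ℕ) : m.descFactorial 3 = (m-2)*((m-1)*m) := by
  simp [Nat.descFactorial_succ]

lemma main_bound (hn : 3 ≤ n) {p : ℝ} (hp0 : 0 < p) (hp1 : p < 1) :
    (1 - p) ^ 9 * (E1 n p / (E1 n p + 2)) ≤ Pb p (Bev n) := by
  have hp0' : (0:ℝ) ≤ p := hp0.le
  have hp1' : p ≤ 1 := hp1.le
  have h1p : (0:ℝ) < 1 - p := by linarith
  have hDpos : 0 < (n.descFactorial 3 : ℝ) := by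
    have : 0 < n.descFactorial 3 := by
      rw [descFactorial_three]
      have h2 : 0 < n - 2 := by omega
      have h1 : 0 < n - 1 := by omega
      have h0 : 0 < n := by omega
      positivity
    exact_mod_cast this
  have hE1pos : 0 < E1 n p := by
    have hlow : 0 < (n.descFactorial 3 : ℝ) * (p ^ 2 * (1 - p) ^ (3 * n)) := by positivity
    exact lt_of_lt_of_le hlow (E1_ge hp0' hp1')
  have hE2pos : 0 < E2 n p := lt_of_lt_of_le hE1pos (E1_le_E2 hp0' hp1')
  have hcs := cauchy_schwarz (n := n) hp0' hp1'
  have hup := E2_le (n := n) hp0' hp1'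
  have hPbnn : 0 ≤ Pb p (Bev n) := Pb_nonneg hp0' hp1' _
  have h9 : (0:ℝ) ≤ (1 - p) ^ 9 := by positivity
  have key : ((1 - p) ^ 9 * E1 n p) * E1 n p ≤ (Pb p (Bev n) * (E1 n p + 2)) * E1 n p := by
    nlinarith [mul_le_mul_of_nonneg_left hcs h9, mul_le_mul_of_nonneg_left hup hPbnn]
  have key2 : (1 - p) ^ 9 * E1 n p ≤ Pb p (Bev n) * (E1 n p + 2) :=
    le_of_mul_le_mul_right key hE1pos
  rw [← mul_div_assoc, div_le_iff₀ (by linarith : (0:ℝ) < E1 n p + 2)]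
  exact key2

end Bridge

section Asymptotics

lemma exp_bound {x : ℝ} (h0 : 0 ≤ x) (h2 : x ≤ 1/2) : Real.exp (-(2*x)) ≤ 1 - x := by
  have h := Real.add_one_le_exp (2*x)
  have hexp : (0:ℝ) < Real.exp (2*x) := Real.exp_pos _
  have key : 1 ≤ (1-x) * Real.exp (2*x) := by nlinarith
  rw [Real.exp_neg]
  have hinv : (Real.exp (2*x))⁻¹ * Real.exp (2*x) = 1 := inv_mul_cancel₀ hexp.ne'
  nlinarith

lemma one_sub_pow_ge {p : ℝ} (n : ℕ) (h0 : 0 ≤ p) (hnp : (n:ℝ) * p ≤ 1) (h2 : p ≤ 1/2) :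
    Real.exp (-6) ≤ (1 - p) ^ (3*n) := by
  have step1 : Real.exp (-(2*p)) ^ (3*n) ≤ (1-p) ^ (3*n) :=
    pow_le_pow_left₀ (Real.exp_nonneg _) (exp_bound h0 h2) _
  have step2 : Real.exp (-6) ≤ Real.exp (-(2*p)) ^ (3*n) := by
    rw [← Real.exp_nat_mul]
    apply Real.exp_le_exp.2
    push_cast
    nlinarith
  exact le_trans step2 step1

lemma E1_tendsto (α : ℝ) (h1 : 1 ≤ α) (h2 : α < 3/2) :
    Tendsto (fun n : ℕ => E1 n ((n:ℝ)^(-α))) atTop atTop := by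
  have hlow : ∀ᶠ n : ℕ in atTop,
      Real.exp (-6)/8 * (n:ℝ)^(3-2*α) ≤ E1 n ((n:ℝ)^(-α)) := by
    filter_upwards [eventually_ge_atTop 4] with n hn
    have hn4 : (4:ℝ) ≤ (n:ℝ) := by exact_mod_cast hn
    have hn0 : (0:ℝ) < (n:ℝ) := by linarith
    have h1n : (1:ℝ) ≤ (n:ℝ) := by linarith
    set p : ℝ := (n:ℝ)^(-α) with hpdef
    have hp0 : 0 < p := Real.rpow_pos_of_pos hn0 _
    have hp1 : p < 1 := Real.rpow_lt_one_of_one_lt_of_neg (by linarith) (by linarith)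
    have hpinv : p ≤ ((n:ℝ))⁻¹ := by
      rw [hpdef, ← Real.rpow_neg_one]
      exact Real.rpow_le_rpow_of_exponent_le h1n (by linarith)
    have hnp : (n:ℝ) * p ≤ 1 := by
      calc (n:ℝ) * p ≤ (n:ℝ) * (n:ℝ)⁻¹ := by
            exact mul_le_mul_of_nonneg_left hpinv (by linarith)
        _ = 1 := mul_inv_cancel₀ hn0.ne'
    have hphalf : p ≤ 1/2 := by
      have : ((n:ℝ))⁻¹ ≤ 1/2 := by
        rw [inv_le_comm₀ hn0 (by norm_num)]
        linarith
      linarith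
    have hC : Real.exp (-6) ≤ (1-p)^(3*n) := one_sub_pow_ge n hp0.le hnp hphalf
    have hB : (n:ℝ)^(3:ℕ)/8 ≤ (n.descFactorial 3 : ℝ) := by
      have hcast : (n.descFactorial 3 : ℝ) = ((n:ℝ)-2)*(((n:ℝ)-1)*(n:ℝ)) := by
        rw [descFactorial_three]
        push_cast [Nat.cast_sub (by omega : 2 ≤ n), Nat.cast_sub (by omega : 1 ≤ n)]
        ring
      rw [hcast]
      nlinarith
    have hA : (n:ℝ)^(3-2*α) = (n:ℝ)^(3:ℕ) * p^2 := by
      rw [hpdef]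
      rw [show (3 - 2*α) = (3:ℝ) + (-α * 2) by ring, Real.rpow_add hn0]
      congr 1
      · rw [← Real.rpow_natCast (n:ℝ) 3]
        norm_num
      · rw [Real.rpow_mul hn0.le, ← Real.rpow_natCast ((n:ℝ)^(-α)) 2]
        norm_num
    have hE := E1_ge (n := n) hp0.le hp1.le
    have hC' : p^2 * Real.exp (-6) ≤ p^2 * (1-p)^(3*n) :=
      mul_le_mul_of_nonneg_left hC (sq_nonneg p)
    have hBC : ((n:ℝ)^(3:ℕ)/8) * (p^2 * Real.exp (-6))
        ≤ (n.descFactorial 3 : ℝ) * (p^2 * (1-p)^(3*n)) := by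
      apply mul_le_mul hB hC' (by positivity) (by positivity)
    calc Real.exp (-6)/8 * (n:ℝ)^(3-2*α)
        = ((n:ℝ)^(3:ℕ)/8) * (p^2 * Real.exp (-6)) := by rw [hA]; ring
      _ ≤ (n.descFactorial 3 : ℝ) * (p^2 * (1-p)^(3*n)) := hBC
      _ ≤ E1 n p := hE
  have hgrow : Tendsto (fun n : ℕ => Real.exp (-6)/8 * (n:ℝ)^(3-2*α)) atTop atTop :=
    Tendsto.const_mul_atTop (by positivity)
      ((tendsto_rpow_atTop (by linarith)).comp tendsto_natCast_atTop_atTop)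
  exact tendsto_atTop_mono' atTop hlow hgrow

lemma frac_tendsto : Tendsto (fun x : ℝ => x/(x+2)) atTop (nhds 1) := by
  have h2 : Tendsto (fun x : ℝ => 2/(x+2)) atTop (nhds 0) :=
    Tendsto.div_atTop tendsto_const_nhds (tendsto_atTop_add_const_right _ 2 tendsto_id)
  have h3 : Tendsto (fun x : ℝ => 1 - 2/(x+2)) atTop (nhds (1-0)) :=
    tendsto_const_nhds.sub h2
  rw [sub_zero] at h3
  apply h3.congr'
  filter_upwards [eventually_ge_atTop (1:ℝ)] with x hx
  have hne : x + 2 ≠ 0 := by linarith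
  field_simp
  ring

end Asymptotics

end ERProof

/-- For `p = n^{-α}` with `α ∈ [1, 3/2)`, with high probability `G(n,p)` has two
minimal vertex covers of different cardinalities, i.e. the random edge ideal `I(n,p)`
is not unmixed. -/
theorem not_unmixed_whp_sparse (α : ℝ) (h1 : 1 ≤ α) (h2 : α < 3 / 2) :
    Tendsto (fun n : ℕ => erProb n ((n : ℝ) ^ (-α))
        {G | ∃ C D : Set (Fin n), IsMinimalVertexCover G C ∧ IsMinimalVertexCover G D ∧
          C.ncard ≠ D.ncard})
      atTop (nhds 1) := by
  classical
  have hp01 : ∀ n : ℕ, 0 ≤ (n:ℝ)^(-α) ∧ (n:ℝ)^(-α) ≤ 1 := by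
    intro n
    rcases Nat.eq_zero_or_pos n with h | h
    · subst h
      rw [Nat.cast_zero, Real.zero_rpow (by intro hc; rw [neg_eq_zero] at hc; linarith)]
      norm_num
    · have h1n : (1:ℝ) ≤ (n:ℝ) := by exact_mod_cast h
      exact ⟨(Real.rpow_pos_of_pos (by linarith) _).le,
        Real.rpow_le_one_of_one_le_of_nonpos h1n (by linarith)⟩
  have hE1 : Tendsto (fun n : ℕ => ERProof.E1 n ((n:ℝ)^(-α))) atTop atTop :=
    ERProof.E1_tendsto α h1 h2
  have hfrac : Tendsto (fun n : ℕ =>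
      ERProof.E1 n ((n:ℝ)^(-α)) / (ERProof.E1 n ((n:ℝ)^(-α)) + 2)) atTop (nhds 1) :=
    ERProof.frac_tendsto.comp hE1
  have hpzero : Tendsto (fun n : ℕ => (n:ℝ)^(-α)) atTop (nhds 0) :=
    (tendsto_rpow_neg_atTop (by linarith)).comp tendsto_natCast_atTop_atTop
  have hpow : Tendsto (fun n : ℕ => (1 - (n:ℝ)^(-α))^9) atTop (nhds 1) := by
    have := (tendsto_const_nhds (x := (1:ℝ)) (f := atTop (α := ℕ))).sub hpzero
    have h9 := this.pow 9
    norm_num at h9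
    exact h9
  have hlowval : Tendsto (fun n : ℕ => (1 - (n:ℝ)^(-α))^9
      * (ERProof.E1 n ((n:ℝ)^(-α)) / (ERProof.E1 n ((n:ℝ)^(-α)) + 2))) atTop (nhds 1) := by
    have := hpow.mul hfrac
    norm_num at this
    exact this
  apply tendsto_of_tendsto_of_tendsto_of_le_of_le' hlowval tendsto_const_nhds
  · -- lower bound eventually
    filter_upwards [eventually_ge_atTop 3] with n hn
    have hn0 : (0:ℝ) < (n:ℝ) := by exact_mod_cast (by omega : 0 < n)
    have hp0 : 0 < (n:ℝ)^(-α) := Real.rpow_pos_of_pos hn0 _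
    have hp1 : (n:ℝ)^(-α) < 1 := Real.rpow_lt_one_of_one_lt_of_neg
      (by exact_mod_cast (by omega : 1 < n)) (by linarith)
    calc (1 - (n:ℝ)^(-α))^9
          * (ERProof.E1 n ((n:ℝ)^(-α)) / (ERProof.E1 n ((n:ℝ)^(-α)) + 2))
        ≤ ERProof.Pb ((n:ℝ)^(-α)) (ERProof.Bev n) := ERProof.main_bound hn hp0 hp1
      _ ≤ ERProof.Pb ((n:ℝ)^(-α)) (ERProof.toGraph ⁻¹'
            {G : SimpleGraph (Fin n) | ∃ C D : Set (Fin n), IsMinimalVertexCover G C ∧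
              IsMinimalVertexCover G D ∧ C.ncard ≠ D.ncard}) :=
          ERProof.Pb_mono hp0.le hp1.le ERProof.Bev_subset
      _ = erProb n ((n:ℝ)^(-α)) _ := (ERProof.erProb_eq_Pb n _ _).symm
  · filter_upwards with n
    rw [ERProof.erProb_eq_Pb]
    exact ERProof.Pb_le_one (hp01 n).1 (hp01 n).2 _
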